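/- Let $1 \le q \le p \le \infty$ and $\phi \in \mathcal{G}_{q,p}$. There exists a constant $c > 0$ such that for every $r_0 > 0$, $\frac{c}{\phi(r_0)} \le \big\| \chi_{B(0,r_0)} \big\|_{(L^q,L^p)^\phi}$, where $\chi_{B(0,r_0)}$ is the characteristic function of the Euclidean ball $B(0,r_0) \subset \mathbb{R}^d$. -/

import Mathlib

open MeasureTheory ENNReal Set Metric Filter

noncomputable section

/-- Shorthand for the Euclidean space `ℝ^d`. -/
abbrev Rd (d : ℕ) := EuclideanSpace ℝ (Fin d)

/-- The `L^p` "norm" (with values in `ℝ≥0∞`) of an `ℝ≥0∞`-valued function. -/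
def eLpNormE {α : Type*} [MeasurableSpace α] (g : α → ℝ≥0∞) (p : ℝ≥0∞) (μ : Measure α) :
    ℝ≥0∞ :=
  if p = ∞ then essSup g μ else (∫⁻ x, g x ^ p.toReal ∂μ) ^ (1 / p.toReal)

/-- The discrete `ℓ^p` norm of an `ℝ≥0∞`-valued family. -/
def lpNormE {ι : Type*} (a : ι → ℝ≥0∞) (p : ℝ≥0∞) : ℝ≥0∞ :=
  if p = ∞ then ⨆ k, a k else (∑' k, a k ^ p.toReal) ^ (1 / p.toReal)

/-- The continuous amalgam norm `‖f‖_{q,p,r}` of `f : ℝ^d → E`: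
the `L^p` norm (in `y`) of `y ↦ ‖f · χ_{B(y,r)}‖_{L^q}`. -/
def contAmalgam (d : ℕ) {E : Type*} [NormedAddCommGroup E] (f : Rd d → E)
    (q p : ℝ≥0∞) (r : ℝ) : ℝ≥0∞ :=
  eLpNormE (fun y => eLpNorm ((Metric.ball y r).indicator f) q volume) p volume

/-- The continuous amalgam norm of an `ℝ≥0∞`-valued function. -/
def contAmalgamE (d : ℕ) (g : Rd d → ℝ≥0∞) (q p : ℝ≥0∞) (r : ℝ) : ℝ≥0∞ :=
  eLpNormE (fun y => eLpNormE ((Metric.ball y r).indicator g) q volume) p volume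

/-- The half-open cube `Q_k^r = ∏_i [r kᵢ, r (kᵢ + 1))` indexed by `k ∈ ℤ^d`. -/
def unitCube (d : ℕ) (r : ℝ) (k : Fin d → ℤ) : Set (Rd d) :=
  {x | ∀ i, r * k i ≤ x i ∧ x i < r * (k i + 1)}

/-- The discrete amalgam norm: the `ℓ^p` norm over `k ∈ ℤ^d` of `‖f χ_{Q_k^r}‖_{L^q}`. -/
def discAmalgam (d : ℕ) {E : Type*} [NormedAddCommGroup E] (f : Rd d → E)
    (q p : ℝ≥0∞) (r : ℝ) : ℝ≥0∞ :=
  lpNormE (fun k : Fin d → ℤ => eLpNorm ((unitCube d r k).indicator f) q volume) p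

/-- The class `𝒢_{q,p}` of weight functions: `φ` is positive and measurable on `(0,∞)`,
`t ↦ t^{d/p} φ(t)` is almost decreasing and `t ↦ t^{d/q} φ(t)` is almost increasing
(with the convention `1/∞ = 0`). -/
structure IsGqp (d : ℕ) (q p : ℝ≥0∞) (φ : ℝ → ℝ) : Prop where
  measurable : Measurable φ
  pos : ∀ t : ℝ, 0 < t → 0 < φ t
  almost_decreasing : ∃ C : ℝ, 0 < C ∧ ∀ r s : ℝ, 0 < r → r ≤ s →
    s ^ ((d : ℝ) * (1 / p).toReal) * φ s ≤ C * (r ^ ((d : ℝ) * (1 / p).toReal) * φ r)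
  almost_increasing : ∃ C : ℝ, 0 < C ∧ ∀ r s : ℝ, 0 < r → r ≤ s →
    r ^ ((d : ℝ) * (1 / q).toReal) * φ r ≤ C * (s ^ ((d : ℝ) * (1 / q).toReal) * φ s)

/-- The generalized Fofana norm
`‖f‖_{(L^q,L^p)^φ} = sup_{r>0} φ(r)⁻¹ r^{d(-1/q - 1/p)} ‖f‖_{q,p,r}`. -/
def fofanaNorm (d : ℕ) {E : Type*} [NormedAddCommGroup E] (f : Rd d → E)
    (q p : ℝ≥0∞) (φ : ℝ → ℝ) : ℝ≥0∞ :=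
  ⨆ r : {r : ℝ // 0 < r},
    ENNReal.ofReal ((φ r)⁻¹ * (r : ℝ) ^ ((d : ℝ) * (-(1 / q).toReal - (1 / p).toReal))) *
      contAmalgam d f q p r

/-- The generalized Fofana norm of an `ℝ≥0∞`-valued function. -/
def fofanaNormE (d : ℕ) (g : Rd d → ℝ≥0∞) (q p : ℝ≥0∞) (φ : ℝ → ℝ) : ℝ≥0∞ :=
  ⨆ r : {r : ℝ // 0 < r},
    ENNReal.ofReal ((φ r)⁻¹ * (r : ℝ) ^ ((d : ℝ) * (-(1 / q).toReal - (1 / p).toReal))) *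
      contAmalgamE d g q p r

/-- The discrete variant of the generalized Fofana norm,
`sup_{r>0} φ(r)⁻¹ r^{-d/q} ‖f‖~_{q,p,r}`. -/
def fofanaNormDisc (d : ℕ) {E : Type*} [NormedAddCommGroup E] (f : Rd d → E)
    (q p : ℝ≥0∞) (φ : ℝ → ℝ) : ℝ≥0∞ :=
  ⨆ r : {r : ℝ // 0 < r},
    ENNReal.ofReal ((φ r)⁻¹ * (r : ℝ) ^ (-(d : ℝ) * (1 / q).toReal)) *
      discAmalgam d f q p r

/-- The Hardy–Littlewood maximal function (with values in `ℝ≥0∞`). -/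
def hlMax (d : ℕ) {E : Type*} [NormedAddCommGroup E] (f : Rd d → E) (x : Rd d) : ℝ≥0∞ :=
  ⨆ r : {r : ℝ // 0 < r},
    (volume (Metric.ball x (r : ℝ)))⁻¹ * ∫⁻ y in Metric.ball x (r : ℝ), (‖f y‖₊ : ℝ≥0∞)

private lemma eLpNormE_lower_aux {α : Type*} [MeasurableSpace α] {μ : Measure α} (g : α → ℝ≥0∞)
    {p : ℝ≥0∞} (hp : p ≠ 0) {S : Set α} (hS : MeasurableSet S) (hS0 : μ S ≠ 0)
    {K : ℝ≥0∞} (hg : ∀ y ∈ S, K ≤ g y) :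
    K * μ S ^ (1 / p).toReal ≤ eLpNormE g p μ := by
  unfold eLpNormE
  by_cases hptop : p = ∞
  · subst hptop
    simp only [if_true]
    have h0 : (1 / (∞ : ℝ≥0∞)).toReal = 0 := by simp
    rw [h0, ENNReal.rpow_zero, mul_one]
    by_contra hlt
    push_neg at hlt
    have hae : ∀ᵐ x ∂μ, g x ≤ essSup g μ := ae_le_essSup g
    have hnull : μ {x | ¬ g x ≤ essSup g μ} = 0 := ae_iff.mp hae
    have hsub : S ⊆ {x | ¬ g x ≤ essSup g μ} := fun x hx =>
      not_le.mpr (lt_of_lt_of_le hlt (hg x hx))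
    exact hS0 (measure_mono_null hsub hnull)
  · simp only [hptop, if_false]
    have hpt : 0 < p.toReal := ENNReal.toReal_pos hp hptop
    have hexp : (1 / p).toReal = 1 / p.toReal := by
      rw [one_div, ENNReal.toReal_inv, one_div]
    have h1 : K ^ p.toReal * μ S ≤ ∫⁻ x, g x ^ p.toReal ∂μ := by
      calc K ^ p.toReal * μ S = ∫⁻ x, S.indicator (fun _ => K ^ p.toReal) x ∂μ := by
            rw [lintegral_indicator hS, setLIntegral_const]
        _ ≤ ∫⁻ x, g x ^ p.toReal ∂μ := by
            refine lintegral_mono fun x => ?_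
            by_cases hx : x ∈ S
            · rw [Set.indicator_of_mem hx]
              exact ENNReal.rpow_le_rpow (hg x hx) hpt.le
            · rw [Set.indicator_of_notMem hx]; exact zero_le
    have h2 := ENNReal.rpow_le_rpow h1 (by positivity : (0:ℝ) ≤ 1 / p.toReal)
    calc K * μ S ^ (1 / p).toReal
        = (K ^ p.toReal * μ S) ^ (1 / p.toReal) := by
          rw [ENNReal.mul_rpow_of_nonneg _ _ (by positivity : (0:ℝ) ≤ 1 / p.toReal),
            ← ENNReal.rpow_mul, mul_one_div_cancel hpt.ne', ENNReal.rpow_one, hexp]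
      _ ≤ (∫⁻ x, g x ^ p.toReal ∂μ) ^ (1 / p.toReal) := h2

/-- lower bound for the Fofana norm of the characteristic function of
a ball: `c / φ(r₀) ≤ ‖χ_{B(0,r₀)}‖_{(L^q,L^p)^φ}`. -/
theorem fofanaNorm_indicator_ball_lower (d : ℕ) (q p : ℝ≥0∞) (hq : 1 ≤ q) (hqp : q ≤ p)
    (φ : ℝ → ℝ) (hφ : IsGqp d q p φ) :
    ∃ c : ℝ, 0 < c ∧ ∀ r₀ : ℝ, 0 < r₀ →
      ENNReal.ofReal (c / φ r₀) ≤
        fofanaNorm d ((Metric.ball (0 : Rd d) r₀).indicator fun _ => (1 : ℂ)) q p φ := by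
  have hq0 : q ≠ 0 := fun h => by simp [h] at hq
  have hp0 : p ≠ 0 := fun h => by simp [h] at hqp; exact hq0 hqp
  set a := (1 / q).toReal with ha
  set b := (1 / p).toReal with hb
  have ha0 : 0 ≤ a := ENNReal.toReal_nonneg
  have hb0 : 0 ≤ b := ENNReal.toReal_nonneg
  set ω := volume (Metric.ball (0 : Rd d) 1) with hω
  have hω0 : ω ≠ 0 := (measure_ball_pos _ _ one_pos).ne'
  have hωtop : ω ≠ ∞ := measure_ball_lt_top.ne
  have hωR : 0 < ω.toReal := ENNReal.toReal_pos hω0 hωtop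
  refine ⟨(2 : ℝ) ^ (-((d : ℝ) * (a + b))) * ω.toReal ^ (a + b), by positivity, ?_⟩
  intro r₀ hr₀
  have hφ0 : 0 < φ r₀ := hφ.pos r₀ hr₀
  set f := (Metric.ball (0 : Rd d) r₀).indicator (fun _ => (1 : ℂ)) with hf
  have hr2 : (0 : ℝ) < r₀ / 2 := by linarith
  set V := volume (Metric.ball (0 : Rd d) (r₀ / 2)) with hV
  have hV0 : V ≠ 0 := (measure_ball_pos _ _ hr2).ne'
  have hVtop : V ≠ ∞ := measure_ball_lt_top.ne
  have haq : a = 1 / q.toReal := by rw [ha, one_div, ENNReal.toReal_inv, one_div]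
  -- Step 1: inner bound
  have step1 : ∀ y ∈ Metric.ball (0 : Rd d) (r₀ / 2),
      V ^ a ≤ eLpNorm ((Metric.ball y r₀).indicator f) q volume := by
    intro y hy
    have hmono : ∀ x, ‖(Metric.ball y (r₀ / 2)).indicator (fun _ => (1 : ℂ)) x‖ ≤
        ‖(Metric.ball y r₀).indicator f x‖ := by
      intro x
      by_cases hx : x ∈ Metric.ball y (r₀ / 2)
      · have hx1 : x ∈ Metric.ball y r₀ := by
          rw [Metric.mem_ball] at hx ⊢; linarith
      
        have hx2 : x ∈ Metric.ball (0 : Rd d) r₀ := by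
          rw [Metric.mem_ball] at hx hy ⊢
          calc dist x 0 ≤ dist x y + dist y 0 := dist_triangle _ _ _
            _ < r₀ / 2 + r₀ / 2 := add_lt_add hx hy
            _ = r₀ := by ring
        rw [Set.indicator_of_mem hx, Set.indicator_of_mem hx1, hf,
          Set.indicator_of_mem hx2]
      · rw [Set.indicator_of_notMem hx]
        simp only [norm_zero]
        positivity
    have hVy : volume (Metric.ball y (r₀ / 2)) = V := by
      rw [hV, Measure.addHaar_ball_center]
    calc V ^ a = eLpNorm ((Metric.ball y (r₀ / 2)).indicator (fun _ => (1 : ℂ)))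
          q volume := by
          rw [eLpNorm_indicator_const' measurableSet_ball (by rw [hVy]; exact hV0) hq0,
            hVy, haq]
          simp
      _ ≤ _ := eLpNorm_mono hmono
  -- Step 2: outer bound
  have step2 : V ^ (a + b) ≤ contAmalgam d f q p r₀ := by
    have h := eLpNormE_lower_aux
      (fun y => eLpNorm ((Metric.ball y r₀).indicator f) q volume) hp0
      (measurableSet_ball (x := (0 : Rd d)) (ε := r₀ / 2)) hV0 step1
    rw [ENNReal.rpow_add _ _ hV0 hVtop]
    exact h
  -- Pick r = r₀ in the supremum
  have hsup : ENNReal.ofReal ((φ r₀)⁻¹ * r₀ ^ ((d : ℝ) * (-a - b))) * contAmalgam d f q p r₀ ≤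
      fofanaNorm d f q p φ :=
    le_iSup (fun r : {r : ℝ // 0 < r} =>
      ENNReal.ofReal ((φ r)⁻¹ * (r : ℝ) ^ ((d : ℝ) * (-a - b))) *
        contAmalgam d f q p r) ⟨r₀, hr₀⟩
  refine le_trans ?_ hsup
  refine le_trans ?_ (mul_le_mul_right step2 _)
  -- Volume of the ball of radius r₀/2
  have hVform : V = ENNReal.ofReal ((r₀ / 2) ^ d) * ω := by
    rw [hV, Measure.addHaar_ball_of_pos volume (0 : Rd d) hr2, finrank_euclideanSpace_fin]
  have hVpow : V ^ (a + b) =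
      ENNReal.ofReal (((r₀ / 2) ^ d) ^ (a + b)) * ENNReal.ofReal (ω.toReal ^ (a + b)) := by
    have hωpow : ω ^ (a + b) = ENNReal.ofReal (ω.toReal ^ (a + b)) := by
      rw [← ENNReal.ofReal_rpow_of_pos hωR, ENNReal.ofReal_toReal hωtop]
    rw [hVform, ENNReal.mul_rpow_of_nonneg _ _ (by positivity),
      ENNReal.ofReal_rpow_of_pos (by positivity), hωpow]
  rw [hVpow, ← mul_assoc, ← ENNReal.ofReal_mul (by positivity), ← ENNReal.ofReal_mul (by
    have : (0:ℝ) ≤ (φ r₀)⁻¹ * r₀ ^ ((d : ℝ) * (-a - b)) := by positivity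
    positivity)]
  refine ENNReal.ofReal_le_ofReal (le_of_eq ?_)
  have hrpow : ((r₀ / 2) ^ d : ℝ) ^ (a + b) =
      r₀ ^ ((d : ℝ) * (a + b)) * (2 : ℝ) ^ (-((d : ℝ) * (a + b))) := by
    rw [← Real.rpow_natCast (r₀ / 2) d, ← Real.rpow_mul (by positivity),
      div_eq_mul_inv r₀ 2, Real.mul_rpow hr₀.le (by norm_num),
      ← Real.rpow_neg_one 2, ← Real.rpow_mul (by norm_num)]
    ring_nf
  have hneg : r₀ ^ ((d : ℝ) * (-a - b)) = (r₀ ^ ((d : ℝ) * (a + b)))⁻¹ := by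
    rw [show (d : ℝ) * (-a - b) = -((d : ℝ) * (a + b)) by ring, Real.rpow_neg hr₀.le]
  have hXpos : (0 : ℝ) < r₀ ^ ((d : ℝ) * (a + b)) := Real.rpow_pos_of_pos hr₀ _
  rw [hrpow, hneg, div_eq_mul_inv]
  field_simp
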